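/- Let X = ℤ, let E be the set of negative even integers and O the set of negative odd integers. For d ∈ ℕ let A_d = {d(d-1)/2 + 1, ..., d(d-1)/2 + d}. Define H^e = {x ↦ 1[x ∈ A_d ∪ E] : d ∈ ℕ} and H^o = {x ↦ 1[x ∈ A_d ∪ O] : d ∈ ℕ}, and H = H^e ∪ H^o. Then H satisfies UUS and C(H) = ∞; in particular, for every d ∈ ℕ, the closure of the d distinct examples forming A_d with respect to H equals A_d itself, which is finite. -/
import Mathlib


open Set

variable {X : Type*}

/-- The set of distinct examples seen in the first `t` steps of the stream `x`. -/
def seenSet (x : ℕ → X) (t : ℕ) : Set X := x '' {i | i < t}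

/-- The finite prefix `x₁, ..., x_t` of the stream, as a list. -/
def prefList (x : ℕ → X) (t : ℕ) : List X := List.ofFn (fun i : Fin t => x i)

/-- The version space of `H` induced by the positive examples `S`. -/
def versionSpace (H : Set (Set X)) (S : Set X) : Set (Set X) := {h | h ∈ H ∧ S ⊆ h}

/-- The closure `⟨S⟩_H`: common positive examples of all consistent hypotheses. -/
def hclosure (H : Set (Set X)) (S : Set X) : Set X := ⋂₀ versionSpace H S

/-- There exist `d` distinct examples with nonempty version space and finite closure. -/
def FinClosureWitness (H : Set (Set X)) (d : ℕ) : Prop :=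
  ∃ S : Finset X, S.card = d ∧ (versionSpace H ↑S).Nonempty ∧ (hclosure H ↑S).Finite

/-- The Closure dimension of `H` is infinite. -/
def ClosureDimInf (H : Set (Set X)) : Prop := ∀ n : ℕ, ∃ d, n ≤ d ∧ FinClosureWitness H d

/-- The Closure dimension of `H` is at most `d`. -/
def ClosureDimLE (H : Set (Set X)) (d : ℕ) : Prop := ∀ d', d < d' → ¬ FinClosureWitness H d'

/-- Uniformly Unbounded Support property. -/
def UUS (H : Set (Set X)) : Prop := ∀ h ∈ H, h.Infinite

/-- The generator `G` outputs an unseen positive example of `h` at step `s`. -/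
def GenOK (G : List X → X) (h : Set X) (x : ℕ → X) (s : ℕ) : Prop :=
  G (prefList x s) ∈ h \ seenSet x s

def UniformlyGeneratable (H : Set (Set X)) : Prop :=
  ∃ G : List X → X, ∃ d : ℕ, ∀ h ∈ H, ∀ x : ℕ → X, (∀ i, x i ∈ h) →
    ∀ t, (seenSet x t).ncard = d → ∀ s, t ≤ s → GenOK G h x s

def NonUniformlyGeneratable (H : Set (Set X)) : Prop :=
  ∃ G : List X → X, ∀ h ∈ H, ∃ d : ℕ, ∀ x : ℕ → X, (∀ i, x i ∈ h) →
    ∀ t, (seenSet x t).ncard = d → ∀ s, t ≤ s → GenOK G h x s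

/-- `x` is an enumeration of the support `h`. -/
def IsEnum (h : Set X) (x : ℕ → X) : Prop := (∀ i, x i ∈ h) ∧ ∀ y ∈ h, ∃ i, x i = y

def GeneratableInLimit (H : Set (Set X)) : Prop :=
  ∃ G : List X → X, ∀ h ∈ H, ∀ x : ℕ → X, IsEnum h x →
    ∃ t, ∀ s, t ≤ s → GenOK G h x s

/-- The block `A_d = {d(d-1)/2 + 1, ..., d(d-1)/2 + d}` as a subset of `ℤ`. -/
def Ablock (d : ℕ) : Set ℤ :=
  {x : ℤ | (d : ℤ) * ((d : ℤ) - 1) / 2 + 1 ≤ x ∧ x ≤ (d : ℤ) * ((d : ℤ) - 1) / 2 + (d : ℤ)}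

/-- The negative even integers. -/
def Eneg : Set ℤ := {x : ℤ | x < 0 ∧ Even x}

/-- The negative odd integers. -/
def Oneg : Set ℤ := {x : ℤ | x < 0 ∧ Odd x}

/-- `H^e = {x ↦ 1[x ∈ A_d ∪ E] : d ∈ ℕ}`. -/
def He : Set (Set ℤ) := {h | ∃ d : ℕ, 1 ≤ d ∧ h = Ablock d ∪ Eneg}

/-- `H^o = {x ↦ 1[x ∈ A_d ∪ O] : d ∈ ℕ}`. -/
def Ho : Set (Set ℤ) := {h | ∃ d : ℕ, 1 ≤ d ∧ h = Ablock d ∪ Oneg}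

/-- `H = H^e ∪ H^o`. -/
def Hblocks : Set (Set ℤ) := He ∪ Ho

lemma Ablock_eq_Icc (d : ℕ) :
    Ablock d = Set.Icc ((d : ℤ) * ((d : ℤ) - 1) / 2 + 1) ((d : ℤ) * ((d : ℤ) - 1) / 2 + d) := by
  ext x; simp [Ablock, Set.mem_Icc]

lemma Eneg_infinite : Eneg.Infinite := by
  apply Set.infinite_of_injective_forall_mem (f := fun n : ℕ => (-2 : ℤ) * (n + 1))
  · intro a b h
    simp only at h
    omega
  · intro n
    refine ⟨by linarith [Int.ofNat_nonneg n], ⟨-(n + 1), by ring⟩⟩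

lemma Oneg_infinite : Oneg.Infinite := by
  apply Set.infinite_of_injective_forall_mem (f := fun n : ℕ => -(2 * (n : ℤ) + 1))
  · intro a b h
    simp only at h
    omega
  · intro n
    refine ⟨by linarith [Int.ofNat_nonneg n], ⟨-(n + 1), by ring⟩⟩

lemma Ablock_ncard (d : ℕ) : (Ablock d).ncard = d := by
  rw [Ablock_eq_Icc]
  rw [← Finset.coe_Icc, Set.ncard_coe_finset, Int.card_Icc]
  omega

lemma hclosure_Ablock (d : ℕ) (hd : 1 ≤ d) :
    hclosure Hblocks (Ablock d) = Ablock d := by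
  apply subset_antisymm
  · intro x hx
    have he : (Ablock d ∪ Eneg) ∈ versionSpace Hblocks (Ablock d) :=
      ⟨Or.inl ⟨d, hd, rfl⟩, Set.subset_union_left⟩
    have ho : (Ablock d ∪ Oneg) ∈ versionSpace Hblocks (Ablock d) :=
      ⟨Or.inr ⟨d, hd, rfl⟩, Set.subset_union_left⟩
    have h1 := hx _ he
    have h2 := hx _ ho
    rcases h1 with h1 | h1
    · exact h1
    rcases h2 with h2 | h2
    · exact h2
    · exact absurd h2.2 (Int.not_odd_iff_even.mpr h1.2)
  · intro x hx h hh
    exact hh.2 hx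

lemma finClosureWitness_Ablock (d : ℕ) (hd : 1 ≤ d) : FinClosureWitness Hblocks d := by
  refine ⟨Finset.Icc ((d : ℤ) * ((d : ℤ) - 1) / 2 + 1) ((d : ℤ) * ((d : ℤ) - 1) / 2 + d),
    ?_, ?_, ?_⟩
  · rw [Int.card_Icc]; omega
  · rw [Finset.coe_Icc, ← Ablock_eq_Icc]
    exact ⟨Ablock d ∪ Eneg, Or.inl ⟨d, hd, rfl⟩, Set.subset_union_left⟩
  · rw [Finset.coe_Icc, ← Ablock_eq_Icc, hclosure_Ablock d hd, Ablock_eq_Icc]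
    exact Set.finite_Icc _ _

/-- `Hblocks` satisfies UUS and has infinite Closure dimension;
for every `d ≥ 1`, the closure of the `d` distinct examples forming `A_d`
equals `A_d` itself, which is finite. -/
theorem stmt9 :
    UUS Hblocks ∧ ClosureDimInf Hblocks ∧
    ∀ d : ℕ, 1 ≤ d →
      (Ablock d).Finite ∧ (Ablock d).ncard = d ∧ hclosure Hblocks (Ablock d) = Ablock d := by
  refine ⟨?_, ?_, ?_⟩
  · rintro h (⟨d, hd, rfl⟩ | ⟨d, hd, rfl⟩)
    · exact (Eneg_infinite.mono Set.subset_union_right)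
    · exact (Oneg_infinite.mono Set.subset_union_right)
  · intro n
    exact ⟨max n 1, le_max_left _ _, finClosureWitness_Ablock _ (le_max_right _ _)⟩
  · intro d hd
    exact ⟨by rw [Ablock_eq_Icc]; exact Set.finite_Icc _ _, Ablock_ncard d,
      hclosure_Ablock d hd⟩
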